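/- Let s ≥ 1, let z be a complex number with |z| < 1, and let a₀,…,a_{2s+1}, b₁,…,b_{2s+1} be complex numbers with Re(a₀) > 0 and Re(b_i) > Re(a_i) > 0 for all i. Then J_{2s+1}(a₀,…,a_{2s+1}; b₁,…,b_{2s+1}; z) = [Γ(a_{2s+1})Γ(b_{2s+1}−a_{2s+1}) / Γ(b_{2s+1})] · ∑_{k=0}^∞ z^k (a₀)_k (a_{2s+1})_k / (k! (b_{2s+1})_k) · J_{2s}(a₀+k, a₁+k, …, a_{2s}+k; b₁+k, …, b_{2s}+k; z). -/

import Mathlib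

open MeasureTheory

/-- Pochhammer symbol `(x)_k = x(x+1)⋯(x+k-1)`. -/
noncomputable def poch (x : ℂ) (k : ℕ) : ℂ := ∏ i ∈ Finset.range k, (x + (i : ℂ))

/-- Generalized hypergeometric series with upper parameters `α`, lower parameters `β`. -/
noncomputable def hyp (α β : List ℂ) (z : ℂ) : ℂ :=
  ∑' k : ℕ, ((α.map fun w => poch w k).prod /
    ((β.map fun w => poch w k).prod * (Nat.factorial k : ℂ))) * z ^ k

/-- Nested expression: `nestR [x₁,…,x_m] = 1 - (1 - (⋯(1 - x_m)x_{m-1}⋯))x₁`. -/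
def nestR : List ℝ → ℝ
  | [] => 1
  | t :: rest => 1 - nestR rest * t

/-- The Vasilyev-type integral `J_m(a₀,…,a_m; b₁,…,b_m; z)`. -/
noncomputable def Jint (m : ℕ) (a b : ℕ → ℂ) (z : ℂ) : ℂ :=
  ∫ x in Set.univ.pi fun _ : Fin m => Set.Ioo (0:ℝ) 1,
    (∏ i : Fin m, ((x i : ℂ) ^ (a (i.1+1) - 1) *
        ((1 - x i : ℝ) : ℂ) ^ (b (i.1+1) - a (i.1+1) - 1))) /
      ((1 - ((nestR (List.ofFn x).tail * (List.ofFn x).headI : ℝ) : ℂ) * z) ^ (a 0))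

namespace JOdd

open Complex Set Filter

/-! ### Pochhammer lemmas -/

lemma poch_succ (x : ℂ) (k : ℕ) : poch x (k+1) = poch x k * (x + k) := by
  simp [poch, Finset.prod_range_succ]

lemma poch_ne_zero {x : ℂ} (hx : 0 < x.re) (k : ℕ) : poch x k ≠ 0 := by
  induction k with
  | zero => simp [poch]
  | succ k ih =>
      rw [poch_succ]
      refine mul_ne_zero ih fun h => ?_
      have : (x + (k:ℂ)).re = 0 := by rw [h]; simp
      simp only [Complex.add_re, Complex.natCast_re] at this
      linarith [Nat.cast_nonneg (α := ℝ) k]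

lemma Gamma_poch {x : ℂ} (hx : 0 < x.re) (k : ℕ) :
    Complex.Gamma (x + k) = Complex.Gamma x * poch x k := by
  induction k with
  | zero => simp [poch]
  | succ k ih =>
      have hne : x + k ≠ 0 := by
        intro h
        have : (x + (k:ℂ)).re = 0 := by rw [h]; simp
        simp only [Complex.add_re, Complex.natCast_re] at this
        linarith [Nat.cast_nonneg (α := ℝ) k]
      have : x + ((k:ℕ)+1 : ℕ) = (x + k) + 1 := by push_cast; ring
      rw [this, Complex.Gamma_add_one _ hne, ih, poch_succ]
      ring

/-! ### Summability lemmas -/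

/-- Master summability lemma. -/
lemma summable_poch (c : ℂ) {r : ℝ} (h0 : 0 ≤ r) (hr : r < 1) :
    Summable (fun n : ℕ => ‖poch c n‖ / n.factorial * (n+1) * r ^ n) := by
  set f : ℕ → ℝ := fun n => ‖poch c n‖ / n.factorial * (n+1) * r ^ n with hf
  have hfnn : ∀ n, 0 ≤ f n := fun n => by positivity
  set ρ : ℝ := (1 + r) / 2 with hρ
  have hρ1 : ρ < 1 := by rw [hρ]; linarith
  have hrρ : r < ρ := by rw [hρ]; linarith
  refine summable_of_ratio_norm_eventually_le hρ1 ?_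
  have hu : Tendsto (fun n : ℕ => 1/((n:ℝ)+1)) atTop (nhds 0) :=
    tendsto_one_div_add_atTop_nhds_zero_nat
  have htend : Tendsto (fun n : ℕ => (‖c‖ + n) * (n + 2) * r / ((n+1) * (n+1))) atTop (nhds r) := by
    have heq : (fun n : ℕ => (‖c‖ + n) * (n + 2) * r / ((n+1) * (n+1)))
        = fun n : ℕ => ((‖c‖-1) * (1/((n:ℝ)+1)) + 1) * ((1/((n:ℝ)+1)) + 1) * r := by
      funext n
      have hn1 : ((n:ℝ)+1) ≠ 0 := by positivity
      have e1 : (‖c‖-1) * (1/((n:ℝ)+1)) + 1 = (‖c‖ + n)/((n:ℝ)+1) := by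
        rw [mul_one_div, div_add' _ _ _ hn1]; ring_nf
      have e2 : (1/((n:ℝ)+1)) + 1 = ((n:ℝ) + 2)/((n:ℝ)+1) := by
        rw [div_add' _ _ _ hn1]; ring_nf
      rw [e1, e2, div_mul_div_comm, div_mul_eq_mul_div]
    rw [heq]
    have := (((hu.const_mul (‖c‖-1)).add_const 1).mul (hu.add_const 1)).mul_const r
    simpa using this
  have hev : ∀ᶠ n : ℕ in atTop, (‖c‖ + n) * (n + 2) * r / ((n+1) * (n+1)) ≤ ρ :=
    htend.eventually (eventually_le_nhds hrρ)
  filter_upwards [hev] with n hn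
  have hfact : (0:ℝ) < n.factorial := by positivity
  rw [Real.norm_of_nonneg (hfnn _), Real.norm_of_nonneg (hfnn _)]
  have key : f (n+1) ≤ f n * ((‖c‖ + n) * (n + 2) * r / ((n+1) * (n+1))) := by
    have h1 : ‖poch c (n+1)‖ ≤ ‖poch c n‖ * (‖c‖ + n) := by
      rw [poch_succ, norm_mul]
      have : ‖c + (n:ℂ)‖ ≤ ‖c‖ + n := by
        simpa using norm_add_le c (n : ℂ)
      exact mul_le_mul_of_nonneg_left this (norm_nonneg _)
    have hfs : ((n+1).factorial : ℝ) = (n+1) * n.factorial := by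
      push_cast [Nat.factorial_succ]; ring
    rw [hf]
    simp only []
    rw [hfs, pow_succ]
    calc ‖poch c (n+1)‖ / ((n+1) * n.factorial) * (↑(n+1)+1) * (r^n * r)
        ≤ (‖poch c n‖ * (‖c‖ + n)) / ((n+1) * n.factorial) * (↑(n+1)+1) * (r^n * r) := by
          gcongr
      _ = ‖poch c n‖ / n.factorial * (n+1) * r ^ n * ((‖c‖ + n) * (n + 2) * r / ((n+1) * (n+1))) := by
          push_cast
          field_simp
          ring
  calc f (n+1) ≤ f n * ((‖c‖ + n) * (n + 2) * r / ((n+1) * (n+1))) := key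
    _ ≤ f n * ρ := mul_le_mul_of_nonneg_left hn (hfnn n)
    _ = ρ * f n := mul_comm _ _

lemma summable_poch_mul_pow (c : ℂ) {r : ℝ} (h0 : 0 ≤ r) (hr : r < 1) :
    Summable (fun n : ℕ => ‖poch c n‖ / n.factorial * r ^ n) := by
  refine (summable_poch c h0 hr).of_nonneg_of_le (fun n => by positivity) (fun n => ?_)
  calc ‖poch c n‖ / n.factorial * r ^ n = ‖poch c n‖ / n.factorial * 1 * r ^ n := by ring
    _ ≤ ‖poch c n‖ / n.factorial * (n+1) * r ^ n := by
        gcongr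
        · linarith [Nat.cast_nonneg (α := ℝ) n]

lemma summable_binom (c : ℂ) {w : ℂ} (hw : ‖w‖ < 1) :
    Summable (fun n : ℕ => poch c n / n.factorial * w ^ n) := by
  apply Summable.of_norm
  have heq : (fun n : ℕ => ‖poch c n / n.factorial * w ^ n‖)
      = fun n : ℕ => ‖poch c n‖ / n.factorial * ‖w‖ ^ n := by
    funext n
    rw [norm_mul, norm_div, norm_pow]
    simp
  rw [heq]
  exact summable_poch_mul_pow c (norm_nonneg w) hw

/-! ### The binomial series -/

lemma hasSum_binomial (c : ℂ) {w : ℂ} (hw : ‖w‖ < 1) :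
    HasSum (fun k : ℕ => poch c k / k.factorial * w ^ k) ((1 - w) ^ (-c)) := by
  set r : ℝ := (1 + ‖w‖)/2 with hrdef
  have hr0 : 0 < r := by positivity
  have hr1 : r < 1 := by rw [hrdef]; linarith
  have hwr : ‖w‖ < r := by rw [hrdef]; linarith [norm_nonneg w]
  set t : Set ℂ := Metric.ball 0 r with htdef
  set g : ℕ → ℂ → ℂ := fun k u => poch c k / k.factorial * u ^ k with hgdef
  set g' : ℕ → ℂ → ℂ := fun k u => poch c k / k.factorial * (k * u ^ (k-1)) with hg'def
  have hderiv : ∀ k (u : ℂ), HasDerivAt (g k) (g' k u) u := fun k u =>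
    (hasDerivAt_pow k u).const_mul _
  set uN : ℕ → ℝ := fun k => ‖poch c k‖ / k.factorial * (k+1) * r ^ k / r with huNdef
  have huN : Summable uN := (summable_poch c hr0.le hr1).div_const r
  have hbound : ∀ k (u : ℂ), u ∈ t → ‖g' k u‖ ≤ uN k := by
    intro k u hu
    have hu' : ‖u‖ < r := by simpa [htdef] using hu
    rw [hg'def]
    simp only []
    rw [norm_mul, norm_mul, norm_div, norm_pow, Complex.norm_natCast, Complex.norm_natCast]
    match k with
    | 0 => simp [huNdef]; positivity
    | (k+1) =>
      simp only [Nat.add_sub_cancel]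
      rw [huNdef]
      have h1 : ‖u‖ ^ k ≤ r ^ k := pow_le_pow_left₀ (norm_nonneg u) hu'.le k
      calc ‖poch c (k+1)‖ / (k+1).factorial * ((k+1 : ℕ) * ‖u‖ ^ k)
          ≤ ‖poch c (k+1)‖ / (k+1).factorial * (((k:ℝ)+1+1) * r ^ k) := by
            gcongr
            · push_cast; linarith [Nat.cast_nonneg (α := ℝ) k]
        _ = ‖poch c (k+1)‖ / (k+1).factorial * (((k:ℕ)+1:ℕ)+1) * r ^ (k+1) / r := by
            push_cast
            field_simp
            ring
  have hF0 : Summable (fun k => g k 0) := by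
    have := summable_binom c (w := 0) (by simp)
    simpa [hgdef] using this
  have hopen : IsOpen t := Metric.isOpen_ball
  have hconn : IsPreconnected t := (convex_ball (0:ℂ) r).isPreconnected
  have h0t : (0:ℂ) ∈ t := by simp [htdef, hr0]
  have hFderiv : ∀ u ∈ t, HasDerivAt (fun v => ∑' k, g k v) (∑' k, g' k u) u := fun u hu =>
    hasDerivAt_tsum_of_isPreconnected huN hopen hconn (fun k v _ => hderiv k v)
      hbound h0t hF0 hu
  have hgsum : ∀ u ∈ t, Summable (fun k => g k u) := by
    intro u hu
    have hu' : ‖u‖ < 1 := lt_trans (by simpa [htdef] using hu) hr1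
    exact summable_binom c hu'
  have hg'sum : ∀ u ∈ t, Summable (fun k => g' k u) := by
    intro u hu
    exact Summable.of_norm ((huN.of_nonneg_of_le (fun k => norm_nonneg _)
      (fun k => hbound k u hu)))
  have hkey : ∀ u ∈ t, c * (∑' k, g k u) + u * (∑' k, g' k u) = ∑' k, g' k u := by
    intro u hu
    have h1 : (∑' k, g' k u) = ∑' k, g' (k+1) u := by
      rw [Summable.tsum_eq_zero_add (hg'sum u hu)]
      simp [hg'def]
    have h2 : ∀ k : ℕ, c * g k u + u * g' k u = g' (k+1) u := by
      intro k
      have hfact : ((k+1).factorial : ℂ) = (k+1) * k.factorial := by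
        push_cast [Nat.factorial_succ]; ring
      have hfk : (k.factorial : ℂ) ≠ 0 := by exact_mod_cast (Nat.factorial_pos k).ne'
      have hfk1 : ((k+1).factorial : ℂ) ≠ 0 := by exact_mod_cast (Nat.factorial_pos (k+1)).ne'
      rw [hgdef, hg'def]
      simp only [Nat.add_sub_cancel, poch_succ]
      rw [hfact]
      match k with
      | 0 => simp [poch]
      | (m+1) =>
        simp only [Nat.add_sub_cancel]
        have hm2 : ((m:ℂ) + 1 + 1) ≠ 0 := by
          have : (((m+2 : ℕ)) : ℂ) ≠ 0 := Nat.cast_ne_zero.mpr (by omega)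
          push_cast at this
          convert this using 1
          ring
        push_cast
        field_simp
        ring
    calc c * (∑' k, g k u) + u * (∑' k, g' k u)
        = (∑' k, c * g k u) + (∑' k, u * g' k u) := by
          rw [tsum_mul_left, tsum_mul_left]
      _ = ∑' k, (c * g k u + u * g' k u) :=
            (Summable.tsum_add ((hgsum u hu).mul_left c) ((hg'sum u hu).mul_left u)).symm
      _ = ∑' k, g' (k+1) u := by exact tsum_congr h2
      _ = ∑' k, g' k u := h1.symm
  set φ : ℂ → ℂ := fun u => (1 - u) ^ c * (∑' k, g k u) with hφdef
  have hre : ∀ u ∈ t, 0 < (1 - u).re := by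
    intro u hu
    have hu' : ‖u‖ < r := by simpa [htdef] using hu
    have : |u.re| ≤ ‖u‖ := Complex.abs_re_le_norm u
    simp only [sub_re, one_re]
    have := abs_le.mp this
    linarith
  have hφderiv : ∀ u ∈ t, HasDerivAt φ 0 u := by
    intro u hu
    have hne : (1 - u) ≠ 0 := by
      intro h
      have := hre u hu
      rw [h] at this
      simp at this
    have hd1 : HasDerivAt (fun v : ℂ => (1 - v) ^ c) (c * (1 - u) ^ (c - 1) * (-1)) u := by
      have : HasDerivAt (fun v : ℂ => 1 - v) (-1) u := by
        simpa using (hasDerivAt_id u).const_sub 1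
      exact this.cpow_const (Or.inl (hre u hu))
    have hd := hd1.mul (hFderiv u hu)
    have : c * (1 - u) ^ (c - 1) * (-1) * (∑' k, g k u) + (1 - u) ^ c * (∑' k, g' k u) = 0 := by
      have hsplit : (1 - u) ^ c = (1 - u) ^ (c - 1) * (1 - u) := by
        nth_rewrite 1 [show c = (c - 1) + 1 by ring]
        rw [cpow_add _ _ hne, cpow_one]
      have hid : (1 - u) * (∑' k, g' k u) = c * ∑' k, g k u := by
        linear_combination -(hkey u hu)
      rw [hsplit]
      linear_combination ((1 - u) ^ (c - 1)) * hid
    rw [this] at hd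
    exact hd
  have hconst : φ w = φ 0 := by
    have hconv : Convex ℝ t := convex_ball 0 r
    have hdiff : DifferentiableOn ℂ φ t := fun u hu =>
      ((hφderiv u hu).differentiableAt).differentiableWithinAt
    have hfd : ∀ u ∈ t, fderivWithin ℂ φ t u = 0 := by
      intro u hu
      rw [fderivWithin_of_isOpen hopen hu]
      have := (hφderiv u hu).hasFDerivAt.fderiv
      rw [this]
      ext v
      simp
    have hwt : w ∈ t := by
      rw [htdef]; exact Metric.mem_ball.mpr (by simpa [dist_eq_norm] using hwr)
    exact hconv.is_const_of_fderivWithin_eq_zero hdiff hfd hwt h0t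
  have hF0val : (∑' k, g k 0) = 1 := by
    rw [tsum_eq_single 0]
    · simp [hgdef, poch]
    · intro k hk
      match k, hk with
      | (k+1), _ => simp [hgdef]
  have hφ0 : φ 0 = 1 := by
    rw [hφdef]
    simp only [sub_zero, one_cpow, hF0val, mul_one]
  have hw1 : (1 : ℂ) - w ≠ 0 := by
    intro h
    have : (1:ℂ) = w := by linear_combination h
    rw [← this] at hw
    simp at hw
  have hne : (1 - w) ^ c ≠ 0 := by
    rw [Ne, cpow_eq_zero_iff]
    tauto
  have hmul : (1 - w) ^ c * (∑' k, g k w) = 1 := hconst.trans hφ0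
  have hFw : (∑' k, g k w) = ((1 - w) ^ c)⁻¹ := eq_inv_of_mul_eq_one_left
    (by rw [mul_comm]; exact hmul)
  rw [(summable_binom c hw).hasSum_iff]
  rw [cpow_neg]
  simpa [hgdef] using hFw

/-! ### Nested product lemmas -/

/-- `Qv` is the nested product appearing in the denominator. -/
noncomputable def Qv {m : ℕ} (x : Fin m → ℝ) : ℝ :=
  nestR (List.ofFn x).tail * (List.ofFn x).headI

lemma ofFn_tail {m : ℕ} (x : Fin (m+1) → ℝ) :
    (List.ofFn x).tail = List.ofFn (fun i : Fin m => x i.succ) := by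
  rw [List.ofFn_succ]; rfl

lemma ofFn_headI {m : ℕ} (x : Fin (m+1) → ℝ) : (List.ofFn x).headI = x 0 := by
  rw [List.ofFn_succ]; rfl

lemma Qv_succ {m : ℕ} (x : Fin (m+1) → ℝ) :
    Qv x = nestR (List.ofFn (fun i : Fin m => x i.succ)) * x 0 := by
  rw [Qv, ofFn_tail, ofFn_headI]

lemma nestR_mem : ∀ l : List ℝ, (∀ t ∈ l, t ∈ Set.Icc (0:ℝ) 1) → nestR l ∈ Set.Icc (0:ℝ) 1 := by
  intro l
  induction l with
  | nil => intro _; simp [nestR]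
  | cons t rest ih =>
      intro h
      have ht : t ∈ Set.Icc (0:ℝ) 1 := h t (by simp)
      have hr := ih (fun u hu => h u (by simp [hu]))
      rw [nestR]
      constructor
      · nlinarith [hr.1, hr.2, ht.1, ht.2]
      · nlinarith [hr.1, hr.2, ht.1, ht.2]

lemma nestR_append : ∀ (l : List ℝ) (t : ℝ),
    nestR (l ++ [t]) = nestR l + (-1)^(l.length+1) * t * l.prod := by
  intro l
  induction l with
  | nil => intro t; simp [nestR]; ring
  | cons s rest ih =>
      intro t
      show 1 - nestR (rest ++ [t]) * s = _
      rw [ih t]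
      show _ = (1 - nestR rest * s) + (-1)^((s :: rest).length + 1) * t * (s :: rest).prod
      simp only [List.length_cons, List.prod_cons]
      ring

lemma continuous_nestR_ofFn : ∀ (m : ℕ), Continuous fun x : Fin m → ℝ => nestR (List.ofFn x) := by
  intro m
  induction m with
  | zero =>
      have h : (fun x : Fin 0 → ℝ => nestR (List.ofFn x)) = fun _ => (1:ℝ) := by
        funext x
        rw [List.ofFn_zero]
        rfl
      rw [h]
      exact continuous_const
  | succ m ih =>
      have : (fun x : Fin (m+1) → ℝ => nestR (List.ofFn x))
          = fun x => 1 - nestR (List.ofFn (fun i : Fin m => x i.succ)) * x 0 := by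
        funext x
        rw [List.ofFn_succ]
        rfl
      rw [this]
      apply Continuous.sub continuous_const
      exact (ih.comp (continuous_pi fun i => continuous_apply _)).mul (continuous_apply _)

lemma continuous_Qv (m : ℕ) : Continuous (Qv (m := m)) := by
  match m with
  | 0 =>
      have h : (Qv (m := 0)) = fun _ => (0:ℝ) := by
        funext x
        rw [Qv, List.ofFn_zero]
        show nestR [] * (default : ℝ) = 0
        show nestR [] * (0:ℝ) = 0
        ring
      rw [h]
      exact continuous_const
  | (m+1) =>
      have : (Qv (m := m+1)) = fun x => nestR (List.ofFn (fun i : Fin m => x i.succ)) * x 0 := by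
        funext x; exact Qv_succ x
      rw [this]
      exact ((continuous_nestR_ofFn m).comp
        (continuous_pi fun i => continuous_apply _)).mul (continuous_apply _)

lemma Qv_mem {m : ℕ} {x : Fin m → ℝ} (hx : ∀ i, x i ∈ Set.Icc (0:ℝ) 1) :
    Qv x ∈ Set.Icc (0:ℝ) 1 := by
  match m with
  | 0 =>
      have h : Qv x = 0 := by
        rw [Qv, List.ofFn_zero]
        show nestR [] * (0:ℝ) = 0
        ring
      rw [h]
      constructor <;> norm_num
  | (m+1) =>
      rw [Qv_succ]
      have h1 : nestR (List.ofFn (fun i : Fin m => x i.succ)) ∈ Set.Icc (0:ℝ) 1 := by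
        apply nestR_mem
        intro t ht
        rw [List.mem_ofFn] at ht
        obtain ⟨i, rfl⟩ := ht
        exact hx _
      have h2 := hx 0
      constructor
      · nlinarith [h1.1, h1.2, h2.1, h2.2]
      · nlinarith [h1.1, h1.2, h2.1, h2.2]

lemma Qv_snoc {m : ℕ} (hm : 1 ≤ m) (y : Fin m → ℝ) (t : ℝ) :
    Qv (Fin.snoc y t) = Qv y + (-1)^m * t * ∏ i, y i := by
  match m, hm with
  | (m+1), _ =>
    have hofn : List.ofFn (Fin.snoc y t : Fin (m+2) → ℝ) = List.ofFn y ++ [t] := by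
      rw [List.ofFn_succ', List.concat_eq_append]
      congr 1
      · congr 1
        funext i
        simp
      · simp
    rw [Qv, hofn]
    have htail : (List.ofFn y ++ [t]).tail = (List.ofFn y).tail ++ [t] := by
      rw [List.ofFn_succ]
      rfl
    have hhead : (List.ofFn y ++ [t]).headI = (List.ofFn y).headI := by
      rw [List.ofFn_succ]
      rfl
    rw [htail, hhead, nestR_append, ofFn_tail, ofFn_headI]
    have hlen : (List.ofFn (fun i : Fin m => y i.succ)).length = m := by simp
    have hprod : (List.ofFn (fun i : Fin m => y i.succ)).prod = ∏ i : Fin m, y i.succ := by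
      simp [List.prod_ofFn]
    have hprodall : (∏ i : Fin (m+1), y i) = y 0 * ∏ i : Fin m, y i.succ := by
      rw [Fin.prod_univ_succ]
    rw [hlen, hprod, Qv_succ, hprodall]
    ring

/-! ### Beta integral over `Ioo 0 1` -/

lemma beta_Ioo {u v : ℂ} (hu : 0 < u.re) (hv : 0 < v.re) :
    ∫ t in Set.Ioo (0:ℝ) 1, (t:ℂ) ^ (u-1) * ((1 - t : ℝ) : ℂ) ^ (v-1)
      = Complex.Gamma u * Complex.Gamma v / Complex.Gamma (u+v) := by
  have hcast : ∀ t : ℝ, ((1 - t : ℝ) : ℂ) = 1 - (t:ℂ) := by intro t; push_cast; ring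
  have h1 : ∫ t in Set.Ioo (0:ℝ) 1, (t:ℂ) ^ (u-1) * ((1 - t : ℝ) : ℂ) ^ (v-1)
      = Complex.betaIntegral u v := by
    rw [Complex.betaIntegral, intervalIntegral.integral_of_le (by norm_num : (0:ℝ) ≤ 1),
      integral_Ioc_eq_integral_Ioo]
    congr 1
    funext t
    rw [hcast]
  rw [h1]
  have h2 := Complex.Gamma_mul_Gamma_eq_betaIntegral hu hv
  have h3 : Complex.Gamma (u+v) ≠ 0 := Complex.Gamma_ne_zero_of_re_pos (by
    simp only [Complex.add_re]; linarith)
  rw [eq_div_iff h3]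
  linear_combination -h2

lemma beta_integrableOn {u v : ℂ} (hu : 0 < u.re) (hv : 0 < v.re) :
    IntegrableOn (fun t : ℝ => (t:ℂ) ^ (u-1) * ((1 - t : ℝ) : ℂ) ^ (v-1))
      (Set.Ioo (0:ℝ) 1) := by
  have := Complex.betaIntegral_convergent hu hv
  rw [intervalIntegrable_iff_integrableOn_Ioc_of_le (by norm_num : (0:ℝ) ≤ 1)] at this
  have h2 := this.mono_set Set.Ioo_subset_Ioc_self
  apply h2.congr_fun ?_ measurableSet_Ioo
  intro t _
  push_cast
  ring_nf

/-! ### Denominator estimates -/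

lemma D_norm_ge {z : ℂ} {q : ℝ} (hq : q ∈ Set.Icc (0:ℝ) 1) :
    1 - q * ‖z‖ ≤ ‖(1:ℂ) - q * z‖ := by
  have h1 : ‖(1:ℂ)‖ - ‖(q:ℂ) * z‖ ≤ ‖(1:ℂ) - (q:ℂ)*z‖ := norm_sub_norm_le _ _
  have h2 : ‖(q:ℂ) * z‖ = q * ‖z‖ := by
    rw [norm_mul, Complex.norm_real, Real.norm_of_nonneg hq.1]
  rw [h2, norm_one] at h1
  exact h1

lemma D_pos_aux {z : ℂ} (hz : ‖z‖ < 1) {q : ℝ} (hq : q ∈ Set.Icc (0:ℝ) 1) :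
    0 < 1 - q * ‖z‖ := by
  nlinarith [hq.1, hq.2, norm_nonneg z]

lemma D_ne_zero {z : ℂ} (hz : ‖z‖ < 1) {q : ℝ} (hq : q ∈ Set.Icc (0:ℝ) 1) :
    (1:ℂ) - q * z ≠ 0 := by
  intro h
  have := D_norm_ge (z := z) hq
  rw [h] at this
  simp only [norm_zero] at this
  nlinarith [D_pos_aux hz hq]

lemma D_norm_ge' {z : ℂ} (hz : ‖z‖ < 1) {q : ℝ} (hq : q ∈ Set.Icc (0:ℝ) 1) :
    1 - ‖z‖ ≤ ‖(1:ℂ) - q * z‖ := by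
  have := D_norm_ge (z := z) hq
  nlinarith [hq.1, hq.2, norm_nonneg z]

lemma D_re_pos {z : ℂ} (hz : ‖z‖ < 1) {q : ℝ} (hq : q ∈ Set.Icc (0:ℝ) 1) :
    0 < ((1:ℂ) - q * z).re := by
  have h1 : ((1:ℂ) - q * z).re = 1 - q * z.re := by simp
  rw [h1]
  have h2 : |z.re| ≤ ‖z‖ := Complex.abs_re_le_norm z
  have h3 := abs_le.mp h2
  nlinarith [hq.1, hq.2, h3.1, h3.2, hz]

lemma norm_cpow_neg_le {z : ℂ} (hz : ‖z‖ < 1) {q : ℝ} (hq : q ∈ Set.Icc (0:ℝ) 1)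
    (c : ℂ) (hc : 0 < c.re) :
    ‖((1:ℂ) - q * z) ^ (-c)‖ ≤ (1-‖z‖) ^ (-c.re) * Real.exp (Real.pi * |c.im|) := by
  have hne := D_ne_zero hz hq
  rw [Complex.norm_cpow_of_ne_zero hne]
  have harg : |((1:ℂ) - q*z).arg| ≤ Real.pi := abs_le.mpr ⟨(Complex.neg_pi_lt_arg _).le,
    Complex.arg_le_pi _⟩
  have h1 : ‖(1:ℂ) - q*z‖ ^ (-c).re ≤ (1-‖z‖) ^ (-c.re) := by
    rw [Complex.neg_re]
    apply Real.rpow_le_rpow_of_nonpos (by linarith) (D_norm_ge' hz hq) (by linarith)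
  have h2 : Real.exp (-(Real.pi * |c.im|)) ≤ Real.exp (((1:ℂ) - q*z).arg * (-c).im) := by
    apply Real.exp_le_exp.mpr
    have habs : |((1:ℂ) - q*z).arg * (-c).im| ≤ Real.pi * |c.im| := by
      rw [abs_mul]
      simp only [Complex.neg_im, abs_neg]
      exact mul_le_mul_of_nonneg_right harg (abs_nonneg _)
    linarith [neg_abs_le (((1:ℂ) - q*z).arg * (-c).im), (abs_le.mp habs).1]
  calc ‖(1:ℂ) - q*z‖ ^ (-c).re / Real.exp (((1:ℂ) - q*z).arg * (-c).im)
      ≤ (1-‖z‖) ^ (-c.re) / Real.exp (-(Real.pi * |c.im|)) := by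
        apply div_le_div₀ (Real.rpow_nonneg (by linarith) _) h1 (Real.exp_pos _) h2
    _ = (1-‖z‖) ^ (-c.re) * Real.exp (Real.pi * |c.im|) := by
        rw [Real.exp_neg, div_inv_eq_mul]

lemma re_pos_one_sub {w : ℂ} (hw : ‖w‖ < 1) : 0 < (1 - w).re := by
  have h1 : |w.re| ≤ ‖w‖ := Complex.abs_re_le_norm w
  have h2 := abs_le.mp h1
  simp only [Complex.sub_re, Complex.one_re]
  linarith

lemma mul_cpow_pos_re {A B : ℂ} (hA : 0 < A.re) (hB : 0 < B.re) (c : ℂ) :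
    (A * B) ^ c = A ^ c * B ^ c := by
  have hA0 : A ≠ 0 := by intro h; rw [h] at hA; simp at hA
  have hB0 : B ≠ 0 := by intro h; rw [h] at hB; simp at hB
  have hargA : |A.arg| < Real.pi / 2 := Complex.abs_arg_lt_pi_div_two_iff.mpr (Or.inl hA)
  have hargB : |B.arg| < Real.pi / 2 := Complex.abs_arg_lt_pi_div_two_iff.mpr (Or.inl hB)
  have hmem : A.arg + B.arg ∈ Set.Ioc (-Real.pi) Real.pi := by
    have h1 := abs_lt.mp hargA
    have h2 := abs_lt.mp hargB
    constructor <;> [linarith; linarith]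
  rw [Complex.cpow_def_of_ne_zero (mul_ne_zero hA0 hB0), Complex.cpow_def_of_ne_zero hA0,
    Complex.cpow_def_of_ne_zero hB0, ← Complex.exp_add, ← add_mul,
    Complex.log_mul hA0 hB0 hmem]

/-! ### The box and the integrand -/

/-- The open unit box. -/
def box (m : ℕ) : Set (Fin m → ℝ) := Set.univ.pi fun _ : Fin m => Set.Ioo (0:ℝ) 1

lemma measurableSet_box (m : ℕ) : MeasurableSet (box m) :=
  MeasurableSet.univ_pi fun _ => measurableSet_Ioo

lemma mem_box {m : ℕ} {x : Fin m → ℝ} : x ∈ box m ↔ ∀ i, x i ∈ Set.Ioo (0:ℝ) 1 := by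
  simp [box]

/-- The weight product. -/
noncomputable def wgt (a b : ℕ → ℂ) {m : ℕ} (x : Fin m → ℝ) : ℂ :=
  ∏ i : Fin m, ((x i : ℂ) ^ (a (i.1+1) - 1) * ((1 - x i : ℝ) : ℂ) ^ (b (i.1+1) - a (i.1+1) - 1))

/-- The integrand of `Jint`. -/
noncomputable def Jind (m : ℕ) (a b : ℕ → ℂ) (z : ℂ) (x : Fin m → ℝ) : ℂ :=
  wgt a b x / ((1 - (Qv x : ℂ) * z) ^ (a 0))

lemma Jint_eq (m : ℕ) (a b : ℕ → ℂ) (z : ℂ) :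
    Jint m a b z = ∫ x in box m, Jind m a b z x := rfl

/-- The terms of the expansion. -/
noncomputable def Tk (m : ℕ) (a b : ℕ → ℂ) (z : ℂ) (k : ℕ) (x : Fin (m+1) → ℝ) : ℂ :=
  (poch (a 0) k / (k.factorial : ℂ)) * z ^ k * wgt a b x *
    (((∏ i, x i : ℝ)) : ℂ) ^ (k:ℕ) * ((1:ℂ) - (Qv (Fin.init x) : ℂ) * z) ^ (-(a 0 + k))

/-! ### Splitting the last coordinate -/

lemma split_integral {m : ℕ} (f : ℝ → ℂ) (h : (Fin m → ℝ) → ℂ) :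
    ∫ x in box (m+1), f (x (Fin.last m)) * h (Fin.init x)
      = (∫ t in Set.Ioo (0:ℝ) 1, f t) * ∫ y in box m, h y := by
  set e := (MeasurableEquiv.piFinSuccAbove (fun _ : Fin (m+1) => ℝ) (Fin.last m)).symm
  have hmp : MeasurePreserving e :=
    (volume_preserving_piFinSuccAbove (fun _ : Fin (m+1) => ℝ) (Fin.last m)).symm _
  have hemb : MeasurableEmbedding e := e.measurableEmbedding
  have he : ∀ p : ℝ × (Fin m → ℝ), e p = Fin.snoc p.2 p.1 := by
    intro p
    show (MeasurableEquiv.piFinSuccAbove (fun _ : Fin (m+1) => ℝ) (Fin.last m)).symm p = _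
    rw [MeasurableEquiv.piFinSuccAbove_symm_apply]
    rw [Fin.insertNthEquiv_last]
    rfl
  have hpre : e ⁻¹' (box (m+1)) = (Set.Ioo (0:ℝ) 1) ×ˢ (box m) := by
    ext p
    rw [Set.mem_preimage, he p]
    simp only [mem_box, Set.mem_prod]
    constructor
    · intro hmem
      refine ⟨?_, fun j => ?_⟩
      · have := hmem (Fin.last m); rwa [Fin.snoc_last] at this
      · have := hmem (Fin.castSucc j); rwa [Fin.snoc_castSucc] at this
    · rintro ⟨h1, h2⟩ j
      refine Fin.lastCases ?_ (fun i => ?_) j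
      · rwa [Fin.snoc_last]
      · rw [Fin.snoc_castSucc]; exact h2 i
  have step1 : ∫ x in box (m+1), f (x (Fin.last m)) * h (Fin.init x)
      = ∫ p in e ⁻¹' (box (m+1)), f ((e p) (Fin.last m)) * h (Fin.init (e p)) :=
    (hmp.setIntegral_preimage_emb hemb _ _).symm
  have step2 : ∀ p : ℝ × (Fin m → ℝ),
      f ((e p) (Fin.last m)) * h (Fin.init (e p)) = f p.1 * h p.2 := by
    intro p
    rw [he p, Fin.snoc_last, Fin.init_snoc]
  rw [step1, hpre]
  simp_rw [step2]
  rw [Measure.volume_eq_prod, ← Measure.prod_restrict]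
  exact integral_prod_mul f h


lemma hasSum_Tk {m : ℕ} (hmeven : Even m) (hm1 : 1 ≤ m) (a b : ℕ → ℂ) {z : ℂ} (hz : ‖z‖ < 1)
    {x : Fin (m+1) → ℝ} (hx : x ∈ box (m+1)) :
    HasSum (fun k => Tk m a b z k x) (Jind (m+1) a b z x) := by
  have hx' : ∀ i, x i ∈ Set.Icc (0:ℝ) 1 := fun i => Set.Ioo_subset_Icc_self ((mem_box.mp hx) i)
  set q := Qv (Fin.init x) with hqdef
  set π : ℝ := ∏ i, x i with hπdef
  have hinit : ∀ i : Fin m, Fin.init x i ∈ Set.Icc (0:ℝ) 1 := fun i => hx' _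
  have hq : q ∈ Set.Icc (0:ℝ) 1 := Qv_mem hinit
  have hπpos : 0 < π := Finset.prod_pos (fun i _ => ((mem_box.mp hx) i).1)
  have hprodsplit : π = x (Fin.last m) * ∏ i : Fin m, Fin.init x i := by
    rw [hπdef, Fin.prod_univ_castSucc]
    simp only [Fin.init]
    ring
  have hsum1 : Qv x = q + π := by
    have h1 := Qv_snoc (m := m) hm1 (Fin.init x) (x (Fin.last m))
    rw [Fin.snoc_init_self] at h1
    rw [h1, hmeven.neg_one_pow, hprodsplit]
    ring
  have hQx : Qv x ∈ Set.Icc (0:ℝ) 1 := Qv_mem hx'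
  have hπq : π ≤ 1 - q := by
    have := hQx.2
    rw [hsum1] at this
    linarith
  have hA : (1:ℂ) - q*z ≠ 0 := D_ne_zero hz hq
  set w : ℂ := (π : ℂ) * z / (1 - q*z) with hwdef
  have hwn : ‖w‖ < 1 := by
    rw [hwdef, norm_div, norm_mul, Complex.norm_real, Real.norm_of_nonneg hπpos.le]
    rw [div_lt_one (by
      have := D_norm_ge' hz hq
      linarith)]
    have h1 : π * ‖z‖ ≤ (1-q) * ‖z‖ := by nlinarith [norm_nonneg z]
    have h2 : (1-q)*‖z‖ < 1 - q*‖z‖ := by nlinarith [hq.1, hq.2]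
    have h3 := D_norm_ge (z := z) hq
    linarith
  have hfac : (1:ℂ) - (Qv x : ℂ) * z = (1 - q*z) * (1 - w) := by
    rw [hsum1, hwdef]
    push_cast
    field_simp
    ring
  have h1w : 0 < (1 - w).re := re_pos_one_sub hwn
  have hDre : 0 < ((1:ℂ) - q*z).re := D_re_pos hz hq
  have hbin := (hasSum_binomial (a 0) hwn).mul_left (((1:ℂ) - (q:ℝ)*z) ^ (-(a 0)) * wgt a b x)
  have hterm : (fun k => (((1:ℂ) - (q:ℝ)*z) ^ (-(a 0)) * wgt a b x)
        * (poch (a 0) k / k.factorial * w ^ k))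
      = fun k => Tk m a b z k x := by
    funext k
    rw [Tk]
    have hzq : ((1:ℂ) - (q:ℝ)*z) ^ (-(a 0 + k))
        = ((1:ℂ) - (q:ℝ)*z)^(-(a 0)) * ((((1:ℂ) - (q:ℝ)*z)) ^ (k:ℕ))⁻¹ := by
      rw [show -(a 0 + (k:ℂ)) = -(a 0) + (-(k:ℂ)) by ring, Complex.cpow_add _ _ hA]
      congr 1
      rw [Complex.cpow_neg, Complex.cpow_natCast]
    rw [← hqdef, hzq]
    have hwk : w ^ (k:ℕ) = ((π:ℂ))^(k:ℕ) * z^(k:ℕ) * ((((1:ℂ) - (q:ℝ)*z))^(k:ℕ))⁻¹ := by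
      rw [hwdef, div_pow, mul_pow]
      ring
    rw [hwk, ← hπdef]
    ring
  have hval : (((1:ℂ) - (q:ℝ)*z) ^ (-(a 0)) * wgt a b x) * (1 - w) ^ (-(a 0))
      = Jind (m+1) a b z x := by
    rw [Jind, div_eq_mul_inv, ← Complex.cpow_neg]
    rw [show ((1:ℂ) - ((Qv x : ℝ):ℂ) * z) = ((1:ℂ) - (q:ℝ)*z)*(1-w) from hfac]
    rw [mul_cpow_pos_re hDre h1w]
    ring
  rw [← hterm, ← hval]
  exact hbin
lemma wgt_continuousOn (a b : ℕ → ℂ) (m : ℕ) : ContinuousOn (wgt a b (m := m)) (box m) := by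
  apply continuousOn_finset_prod
  intro i _
  apply ContinuousOn.mul
  · apply ContinuousOn.cpow_const
    · exact (Complex.continuous_ofReal.comp (continuous_apply i)).continuousOn
    · intro x hxx
      rw [Complex.mem_slitPlane_iff]
      exact Or.inl (by simpa using ((mem_box.mp hxx) i).1)
  · apply ContinuousOn.cpow_const
    · exact (Complex.continuous_ofReal.comp
        ((continuous_const.sub (continuous_apply i)))).continuousOn
    · intro x hxx
      rw [Complex.mem_slitPlane_iff]
      refine Or.inl ?_
      have := ((mem_box.mp hxx) i).2
      simpa using by linarith
lemma continuous_init {m : ℕ} : Continuous (fun x : Fin (m+1) → ℝ => Fin.init x) :=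
  continuous_pi fun i => continuous_apply _
lemma Tk_continuousOn (a b : ℕ → ℂ) (m : ℕ) {z : ℂ} (hz : ‖z‖ < 1) (k : ℕ) :
    ContinuousOn (Tk m a b z k) (box (m+1)) := by
  apply ContinuousOn.mul
  apply ContinuousOn.mul
  · exact (continuousOn_const.mul (wgt_continuousOn a b (m+1)))
  · exact ((Complex.continuous_ofReal.comp
      (continuous_finset_prod _ fun i _ => continuous_apply i)).pow k).continuousOn
  · apply ContinuousOn.cpow_const
    · apply Continuous.continuousOn
      exact continuous_const.sub (((Complex.continuous_ofReal.comp
        ((continuous_Qv m).comp continuous_init))).mul continuous_const)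
    · intro x hxx
      rw [Complex.mem_slitPlane_iff]
      refine Or.inl ?_
      have hq : Qv (Fin.init x) ∈ Set.Icc (0:ℝ) 1 :=
        Qv_mem (fun i => Set.Ioo_subset_Icc_self ((mem_box.mp hxx) _))
      exact D_re_pos hz hq
lemma norm_Tk_le {m : ℕ} (hmeven : Even m) (hm1 : 1 ≤ m) (a b : ℕ → ℂ) {z : ℂ}
    (hz : ‖z‖ < 1) (ha0 : 0 < (a 0).re) (k : ℕ) {x : Fin (m+1) → ℝ} (hx : x ∈ box (m+1)) :
    ‖Tk m a b z k x‖ ≤ (‖poch (a 0) k‖ / k.factorial * ‖z‖^k *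
      ((1-‖z‖) ^ (-(a 0).re) * Real.exp (Real.pi * |(a 0).im|))) * ‖wgt a b x‖ := by
  have hx' : ∀ i, x i ∈ Set.Icc (0:ℝ) 1 := fun i => Set.Ioo_subset_Icc_self ((mem_box.mp hx) i)
  set q := Qv (Fin.init x) with hqdef
  set π : ℝ := ∏ i, x i with hπdef
  have hq : q ∈ Set.Icc (0:ℝ) 1 := Qv_mem (fun i => hx' _)
  have hπpos : 0 < π := Finset.prod_pos (fun i _ => ((mem_box.mp hx) i).1)
  have hprodsplit : π = x (Fin.last m) * ∏ i : Fin m, Fin.init x i := by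
    rw [hπdef, Fin.prod_univ_castSucc]
    simp only [Fin.init]
    ring
  have hsum1 : Qv x = q + π := by
    have h1 := Qv_snoc (m := m) hm1 (Fin.init x) (x (Fin.last m))
    rw [Fin.snoc_init_self] at h1
    rw [h1, hmeven.neg_one_pow, hprodsplit]
    ring
  have hπq : π ≤ 1 - q := by
    have := (Qv_mem hx').2
    rw [hsum1] at this
    linarith
  have hA : (1:ℂ) - q*z ≠ 0 := D_ne_zero hz hq
  have hsplitpow : ((1:ℂ) - (q:ℝ)*z) ^ (-(a 0 + k))
      = ((1:ℂ) - (q:ℝ)*z)^(-(a 0)) * ((((1:ℂ) - (q:ℝ)*z)) ^ (k:ℕ))⁻¹ := by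
    rw [show -(a 0 + (k:ℂ)) = -(a 0) + (-(k:ℂ)) by ring, Complex.cpow_add _ _ hA]
    congr 1
    rw [Complex.cpow_neg, Complex.cpow_natCast]
  have hDnorm : π ≤ ‖(1:ℂ) - (q:ℝ)*z‖ := by
    have h1 := D_norm_ge (z := z) hq
    nlinarith [hq.1, hq.2, norm_nonneg z, hz]
  have hkey : π^(k:ℕ) * ‖((1:ℂ) - (q:ℝ)*z) ^ (-(a 0 + k))‖
      ≤ (1-‖z‖) ^ (-(a 0).re) * Real.exp (Real.pi * |(a 0).im|) := by
    rw [hsplitpow, norm_mul, norm_inv, norm_pow]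
    have hDpos : 0 < ‖(1:ℂ) - (q:ℝ)*z‖ := by
      have := D_norm_ge' hz hq
      linarith
    have hpk : π^(k:ℕ) ≤ ‖(1:ℂ) - (q:ℝ)*z‖^(k:ℕ) := pow_le_pow_left₀ hπpos.le hDnorm k
    have h1 : π^(k:ℕ) * (‖(1:ℂ) - (q:ℝ)*z‖^(k:ℕ))⁻¹ ≤ 1 := by
      rw [← div_eq_mul_inv, div_le_one (by positivity)]
      exact hpk
    have h2 : ‖((1:ℂ) - (q:ℝ)*z)^(-(a 0))‖
        ≤ (1-‖z‖)^(-(a 0).re) * Real.exp (Real.pi * |(a 0).im|) :=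
      norm_cpow_neg_le hz hq (a 0) ha0
    calc π^(k:ℕ) * (‖((1:ℂ) - (q:ℝ)*z)^(-(a 0))‖ * (‖(1:ℂ) - (q:ℝ)*z‖^(k:ℕ))⁻¹)
        = ‖((1:ℂ) - (q:ℝ)*z)^(-(a 0))‖ * (π^(k:ℕ) * (‖(1:ℂ) - (q:ℝ)*z‖^(k:ℕ))⁻¹) := by ring
      _ ≤ ((1-‖z‖)^(-(a 0).re) * Real.exp (Real.pi * |(a 0).im|)) * 1 := by
          apply mul_le_mul h2 h1 (mul_nonneg (pow_nonneg hπpos.le _)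
            (inv_nonneg.mpr (pow_nonneg (norm_nonneg _) _)))
            (mul_nonneg (Real.rpow_nonneg (by linarith) _) (Real.exp_pos _).le)
      _ = (1-‖z‖)^(-(a 0).re) * Real.exp (Real.pi * |(a 0).im|) := by ring
  rw [Tk]
  rw [norm_mul, norm_mul, norm_mul, norm_mul, norm_div, norm_pow, norm_pow,
    Complex.norm_natCast, Complex.norm_real, Real.norm_of_nonneg hπpos.le]
  calc ‖poch (a 0) k‖ / ↑k.factorial * ‖z‖ ^ k * ‖wgt a b x‖ * π ^ k *
        ‖((1:ℂ) - (q:ℝ)*z) ^ (-(a 0 + k))‖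
      = (‖poch (a 0) k‖ / ↑k.factorial * ‖z‖ ^ k) * ‖wgt a b x‖ *
        (π ^ k * ‖((1:ℂ) - (q:ℝ)*z) ^ (-(a 0 + k))‖) := by ring
    _ ≤ (‖poch (a 0) k‖ / ↑k.factorial * ‖z‖ ^ k) * ‖wgt a b x‖ *
        ((1-‖z‖) ^ (-(a 0).re) * Real.exp (Real.pi * |(a 0).im|)) := by
          apply mul_le_mul_of_nonneg_left hkey
          positivity
    _ = (‖poch (a 0) k‖ / ↑k.factorial * ‖z‖ ^ k *
        ((1-‖z‖) ^ (-(a 0).re) * Real.exp (Real.pi * |(a 0).im|))) * ‖wgt a b x‖ := by ring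
lemma wgt_norm_integrableOn (m : ℕ) (a b : ℕ → ℂ)
    (hre : ∀ i : Fin m, 0 < (a (i.1+1)).re ∧ 0 < (b (i.1+1) - a (i.1+1)).re) :
    IntegrableOn (fun x : Fin m → ℝ => ‖wgt a b x‖) (box m) := by
  set g : Fin m → ℝ → ℝ := fun i => (Set.Ioo (0:ℝ) 1).indicator
      (fun t => ‖(t : ℂ) ^ (a (i.1+1) - 1) * ((1 - t : ℝ) : ℂ) ^ (b (i.1+1) - a (i.1+1) - 1)‖)
    with hgdef
  have hgi : ∀ i, Integrable (g i) := by
    intro i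
    rw [hgdef]
    simp only []
    rw [integrable_indicator_iff measurableSet_Ioo]
    exact (beta_integrableOn (hre i).1 (hre i).2).norm
  have hprod := Integrable.fin_nat_prod (𝕜 := ℝ) hgi
  have heq : (box m).indicator (fun x => ‖wgt a b x‖) = fun x => ∏ i, g i (x i) := by
    funext x
    by_cases hxx : x ∈ box m
    · rw [Set.indicator_of_mem hxx, wgt, norm_prod]
      apply Finset.prod_congr rfl
      intro i _
      rw [hgdef]
      simp only []
      rw [Set.indicator_of_mem ((mem_box.mp hxx) i)]
    · rw [Set.indicator_of_notMem hxx]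
      obtain ⟨i, hi⟩ : ∃ i, x i ∉ Set.Ioo (0:ℝ) 1 := by
        by_contra hcon
        push_neg at hcon
        exact hxx (mem_box.mpr hcon)
      symm
      apply Finset.prod_eq_zero (Finset.mem_univ i)
      rw [hgdef]
      simp only []
      rw [Set.indicator_of_notMem hi]
  have hind : Integrable ((box m).indicator fun x => ‖wgt a b x‖) := by
    rw [heq]
    exact hprod
  exact (integrable_indicator_iff (measurableSet_box m)).mp hind

lemma Tk_integrableOn {m : ℕ} (hmeven : Even m) (hm1 : 1 ≤ m) (a b : ℕ → ℂ) {z : ℂ}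
    (hz : ‖z‖ < 1) (ha0 : 0 < (a 0).re)
    (hre : ∀ i : Fin (m+1), 0 < (a (i.1+1)).re ∧ 0 < (b (i.1+1) - a (i.1+1)).re) (k : ℕ) :
    IntegrableOn (Tk m a b z k) (box (m+1)) := by
  apply Integrable.mono' (((wgt_norm_integrableOn (m+1) a b hre).const_mul
    (‖poch (a 0) k‖ / k.factorial * ‖z‖^k *
      ((1-‖z‖) ^ (-(a 0).re) * Real.exp (Real.pi * |(a 0).im|)))))
    ((Tk_continuousOn a b m hz k).aestronglyMeasurable (measurableSet_box _))
  filter_upwards [ae_restrict_mem (measurableSet_box (m+1))] with x hx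
  exact norm_Tk_le hmeven hm1 a b hz ha0 k hx

lemma summable_integral_norm_Tk {m : ℕ} (hmeven : Even m) (hm1 : 1 ≤ m) (a b : ℕ → ℂ) {z : ℂ}
    (hz : ‖z‖ < 1) (ha0 : 0 < (a 0).re)
    (hre : ∀ i : Fin (m+1), 0 < (a (i.1+1)).re ∧ 0 < (b (i.1+1) - a (i.1+1)).re) :
    Summable (fun k : ℕ => ∫ x in box (m+1), ‖Tk m a b z k x‖) := by
  set CD := (1-‖z‖) ^ (-(a 0).re) * Real.exp (Real.pi * |(a 0).im|) with hCD
  set Bv := ∫ x in box (m+1), ‖wgt a b x‖ with hBv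
  apply Summable.of_nonneg_of_le
    (fun k => integral_nonneg (fun x => norm_nonneg _))
    (fun k => ?_)
    (((summable_poch_mul_pow (a 0) (norm_nonneg z) hz).mul_right (CD * Bv)))
  have h1 : ∫ x in box (m+1), ‖Tk m a b z k x‖
      ≤ ∫ x in box (m+1), (‖poch (a 0) k‖ / k.factorial * ‖z‖^k * CD) * ‖wgt a b x‖ := by
    apply setIntegral_mono_on ((Tk_integrableOn hmeven hm1 a b hz ha0 hre k).norm)
      ((wgt_norm_integrableOn (m+1) a b hre).const_mul _) (measurableSet_box _)
    intro x hx
    exact norm_Tk_le hmeven hm1 a b hz ha0 k hx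
  rw [integral_const_mul] at h1
  calc ∫ x in box (m+1), ‖Tk m a b z k x‖
      ≤ (‖poch (a 0) k‖ / k.factorial * ‖z‖^k * CD) * Bv := h1
    _ = ‖poch (a 0) k‖ / k.factorial * ‖z‖^k * (CD * Bv) := by ring

lemma integral_Tk {m : ℕ} (a b : ℕ → ℂ) {z : ℂ} (hz : ‖z‖ < 1) (k : ℕ)
    (hA : 0 < (a (m+1)).re) (hBA : 0 < (b (m+1) - a (m+1)).re) :
    ∫ x in box (m+1), Tk m a b z k x
      = (poch (a 0) k / (k.factorial : ℂ)) * z ^ k *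
        (Complex.Gamma (a (m+1) + k) * Complex.Gamma (b (m+1) - a (m+1)) /
          Complex.Gamma (b (m+1) + k)) *
        Jint m (fun i => a i + k) (fun i => b i + k) z := by
  have key : ∀ x : Fin (m+1) → ℝ, Tk m a b z k x
      = ((poch (a 0) k / (k.factorial : ℂ)) * z ^ k) *
        (((((x (Fin.last m)) : ℝ) : ℂ) ^ (a (m+1) - 1) *
          ((1 - x (Fin.last m) : ℝ) : ℂ) ^ (b (m+1) - a (m+1) - 1) *
          (((x (Fin.last m)) : ℝ) : ℂ) ^ (k:ℕ)) *
         (wgt a b (Fin.init x) *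
          (((∏ i, Fin.init x i : ℝ)) : ℂ) ^ (k:ℕ) *
          ((1:ℂ) - (Qv (Fin.init x) : ℂ) * z) ^ (-(a 0 + k)))) := by
    intro x
    rw [Tk]
    have e1 : wgt a b x = wgt a b (Fin.init x) *
        (((x (Fin.last m) : ℝ) : ℂ) ^ (a (m+1) - 1) *
          ((1 - x (Fin.last m) : ℝ) : ℂ) ^ (b (m+1) - a (m+1) - 1)) := by
      rw [wgt, wgt, Fin.prod_univ_castSucc]
      congr 1
    have e2 : (((∏ i, x i : ℝ)) : ℂ)
        = (((∏ i, Fin.init x i : ℝ)) : ℂ) * (((x (Fin.last m)) : ℝ) : ℂ) := by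
      rw [Fin.prod_univ_castSucc, Complex.ofReal_mul]
      rfl
    rw [e1, e2, mul_pow]
    ring
  simp_rw [key]
  rw [integral_const_mul]
  rw [split_integral (fun t : ℝ => ((t : ℝ) : ℂ) ^ (a (m+1) - 1) *
      ((1 - t : ℝ) : ℂ) ^ (b (m+1) - a (m+1) - 1) * ((t : ℝ) : ℂ) ^ (k:ℕ))
    (fun y : Fin m → ℝ => wgt a b y * (((∏ i, y i : ℝ)) : ℂ) ^ (k:ℕ) *
      ((1:ℂ) - (Qv y : ℂ) * z) ^ (-(a 0 + k)))]
  have hf : ∫ t in Set.Ioo (0:ℝ) 1, ((t : ℝ) : ℂ) ^ (a (m+1) - 1) *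
      ((1 - t : ℝ) : ℂ) ^ (b (m+1) - a (m+1) - 1) * ((t : ℝ) : ℂ) ^ (k:ℕ)
      = Complex.Gamma (a (m+1) + k) * Complex.Gamma (b (m+1) - a (m+1)) /
        Complex.Gamma (b (m+1) + k) := by
    have heq : Set.EqOn (fun t : ℝ => ((t : ℝ) : ℂ) ^ (a (m+1) - 1) *
        ((1 - t : ℝ) : ℂ) ^ (b (m+1) - a (m+1) - 1) * ((t : ℝ) : ℂ) ^ (k:ℕ))
        (fun t : ℝ => ((t : ℝ) : ℂ) ^ ((a (m+1) + k) - 1) *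
        ((1 - t : ℝ) : ℂ) ^ ((b (m+1) - a (m+1)) - 1)) (Set.Ioo (0:ℝ) 1) := by
      intro t ht
      have hne : ((t : ℝ) : ℂ) ≠ 0 := Complex.ofReal_ne_zero.mpr ht.1.ne'
      simp only []
      rw [show (a (m+1) + (k:ℂ)) - 1 = (a (m+1) - 1) + (k:ℂ) by ring,
        Complex.cpow_add _ _ hne, Complex.cpow_natCast]
      ring
    rw [setIntegral_congr_fun measurableSet_Ioo heq]
    have hApos : 0 < (a (m+1) + (k:ℂ)).re := by
      simp only [Complex.add_re, Complex.natCast_re]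
      linarith [Nat.cast_nonneg (α := ℝ) k]
    rw [beta_Ioo hApos hBA]
    have hexp : a (m+1) + (k:ℂ) + (b (m+1) - a (m+1)) = b (m+1) + k := by ring
    rw [hexp]
  have hh : ∫ y in box m, wgt a b y * (((∏ i, y i : ℝ)) : ℂ) ^ (k:ℕ) *
      ((1:ℂ) - (Qv y : ℂ) * z) ^ (-(a 0 + k))
      = Jint m (fun i => a i + k) (fun i => b i + k) z := by
    rw [Jint_eq]
    apply setIntegral_congr_fun (measurableSet_box m)
    intro y hy
    have hy' : ∀ i, 0 < y i := fun i => ((mem_box.mp hy) i).1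
    rw [Jind]
    have hnum : wgt (fun i => a i + k) (fun i => b i + k) y
        = wgt a b y * (((∏ i, y i : ℝ)) : ℂ) ^ (k:ℕ) := by
      rw [wgt, wgt]
      have hcast : (((∏ i, y i : ℝ)) : ℂ) ^ (k:ℕ) = ∏ i, ((y i : ℝ) : ℂ) ^ (k:ℕ) := by
        rw [show (((∏ i, y i : ℝ)) : ℂ) = ∏ i, ((y i : ℝ) : ℂ) by push_cast; rfl]
        rw [Finset.prod_pow]
      rw [hcast, ← Finset.prod_mul_distrib]
      apply Finset.prod_congr rfl
      intro i _
      have hne : ((y i : ℝ) : ℂ) ≠ 0 := Complex.ofReal_ne_zero.mpr (hy' i).ne'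
      show ((y i : ℝ) : ℂ) ^ (a (i.1+1) + (k:ℂ) - 1) *
          ((1 - y i : ℝ) : ℂ) ^ ((b (i.1+1) + (k:ℂ)) - (a (i.1+1) + (k:ℂ)) - 1)
          = ((y i : ℝ) : ℂ) ^ (a (i.1+1) - 1) *
            ((1 - y i : ℝ) : ℂ) ^ (b (i.1+1) - a (i.1+1) - 1) * ((y i : ℝ) : ℂ) ^ (k:ℕ)
      rw [show a (i.1+1) + (k:ℂ) - 1 = (a (i.1+1) - 1) + (k:ℂ) by ring,
        show (b (i.1+1) + (k:ℂ)) - (a (i.1+1) + (k:ℂ)) - 1 = b (i.1+1) - a (i.1+1) - 1 by ring,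
        Complex.cpow_add _ _ hne, Complex.cpow_natCast]
      ring
    have hden : ((1:ℂ) - (Qv y : ℂ) * z) ^ (-(a 0 + k))
        = (((1:ℂ) - (Qv y : ℂ) * z) ^ ((a 0) + (k:ℂ)))⁻¹ := by
      rw [Complex.cpow_neg]
    show wgt a b y * (((∏ i, y i : ℝ)) : ℂ) ^ (k:ℕ) * ((1:ℂ) - (Qv y : ℂ) * z) ^ (-(a 0 + k))
        = _
    rw [hnum, hden, div_eq_mul_inv]
  rw [hf, hh]
  ring

end JOdd

/-- the odd-step recursion for the Vasilyev-type integral. -/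
theorem J_odd_recursion (s : ℕ) (hs : 1 ≤ s) (z : ℂ) (hz : ‖z‖ < 1) (a b : ℕ → ℂ)
    (ha0 : 0 < (a 0).re)
    (hab : ∀ i : ℕ, 1 ≤ i → i ≤ 2*s+1 → (a i).re < (b i).re ∧ 0 < (a i).re) :
    Jint (2*s+1) a b z =
      (Complex.Gamma (a (2*s+1)) * Complex.Gamma (b (2*s+1) - a (2*s+1)) /
        Complex.Gamma (b (2*s+1))) *
      ∑' k : ℕ, z ^ k *
        (poch (a 0) k * poch (a (2*s+1)) k / ((Nat.factorial k : ℂ) * poch (b (2*s+1)) k)) *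
        Jint (2*s) (fun i => a i + k) (fun i => b i + k) z := by
  classical
  have hm1 : 1 ≤ 2*s := by omega
  have hmeven : Even (2*s) := even_two_mul s
  set m := 2*s with hmdef
  have hre : ∀ i : Fin (m+1), 0 < (a (i.1+1)).re ∧ 0 < (b (i.1+1) - a (i.1+1)).re := by
    intro i
    have h2 : i.1+1 ≤ 2*s+1 := by
      have := i.isLt
      omega
    obtain ⟨hab1, hab2⟩ := hab (i.1+1) (by omega) h2
    refine ⟨hab2, ?_⟩
    rw [Complex.sub_re]
    linarith
  have hA : 0 < (a (m+1)).re := (hab (m+1) (by omega) (by omega)).2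
  have hB' := (hab (m+1) (by omega) (by omega)).1
  have hBA : 0 < (b (m+1) - a (m+1)).re := by
    rw [Complex.sub_re]
    linarith
  have hB : 0 < (b (m+1)).re := lt_trans hA hB'
  rw [JOdd.Jint_eq (m+1) a b z]
  have heqn : Set.EqOn (JOdd.Jind (m+1) a b z) (fun x => ∑' k, JOdd.Tk m a b z k x)
      (JOdd.box (m+1)) := fun x hx =>
    ((JOdd.hasSum_Tk hmeven hm1 a b hz hx).tsum_eq).symm
  rw [setIntegral_congr_fun (JOdd.measurableSet_box _) heqn]
  rw [← MeasureTheory.integral_tsum_of_summable_integral_norm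
    (fun k => JOdd.Tk_integrableOn hmeven hm1 a b hz ha0 hre k)
    (JOdd.summable_integral_norm_Tk hmeven hm1 a b hz ha0 hre)]
  have hterm : ∀ k : ℕ, ∫ x in JOdd.box (m+1), JOdd.Tk m a b z k x
      = (Complex.Gamma (a (m+1)) * Complex.Gamma (b (m+1) - a (m+1)) /
          Complex.Gamma (b (m+1))) *
        (z ^ k * (poch (a 0) k * poch (a (m+1)) k /
            ((Nat.factorial k : ℂ) * poch (b (m+1)) k)) *
          Jint m (fun i => a i + k) (fun i => b i + k) z) := by
    intro k
    rw [JOdd.integral_Tk a b hz k hA hBA]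
    rw [JOdd.Gamma_poch hA k, JOdd.Gamma_poch hB k]
    have h1 : Complex.Gamma (b (m+1)) ≠ 0 := Complex.Gamma_ne_zero_of_re_pos hB
    have h2 : poch (b (m+1)) k ≠ 0 := JOdd.poch_ne_zero hB k
    have h3 : (Nat.factorial k : ℂ) ≠ 0 := by
      exact_mod_cast (Nat.factorial_pos k).ne'
    field_simp
  rw [tsum_congr hterm, tsum_mul_left]
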